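/- Let m > 0 be an integer and p a prime. Then the sum of the binomial coefficients C(m, k), taken over all k with 1 ≤ k ≤ m − 1 and (p − 1) ∣ k, is divisible by p. -/

import Mathlib

open Finset

theorem hermite_bachmann (m p : ℕ) (hm : 0 < m) (hp : p.Prime) :
    p ∣ ∑ k ∈ (Finset.Ico 1 m).filter (fun k => (p - 1) ∣ k), m.choose k := by
  haveI : Fact p.Prime := ⟨hp⟩
  classical
  set K := ZMod p
  have hcard : Fintype.card K = p := ZMod.card p
  -- sum of i-th powers over units
  have hunits : ∀ i : ℕ, (∑ x : Kˣ, (x : K) ^ i) = if p - 1 ∣ i then -1 else 0 := by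
    intro i
    simpa [hcard] using FiniteField.sum_pow_units K i
  -- units sum vs full sum
  have hemb : ∀ f : K → K, f 0 = 0 → (∑ x : Kˣ, f x) = ∑ y : K, f y := by
    intro f hf
    let φ : Kˣ ↪ K := ⟨fun x ↦ x, fun _ _ => Units.ext⟩
    have hmap : univ.map φ = univ \ {0} := by
      ext x
      simpa only [mem_map, mem_univ, Function.Embedding.coeFn_mk, true_and, mem_sdiff,
        mem_singleton, φ] using (show (∃ a : Kˣ, φ a = x) ↔ ¬x = 0 from isUnit_iff_ne_zero)
    calc (∑ x : Kˣ, f x) = ∑ y ∈ univ.map φ, f y := by rw [Finset.sum_map]; rfl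
      _ = ∑ y ∈ univ \ {0}, f y := by rw [hmap]
      _ = ∑ y : K, f y := by
          rw [Finset.sum_sdiff_eq_sub (Finset.singleton_subset_iff.mpr (mem_univ 0)),
            Finset.sum_singleton, hf, sub_zero]
  -- sum of m-th powers over all of K
  have hall : (∑ y : K, y ^ m) = if p - 1 ∣ m then -1 else 0 := by
    rw [← hemb (fun y => y ^ m) (by simp [zero_pow hm.ne'])]
    exact hunits m
  -- the key double-counting identity
  have key : (∑ k ∈ Finset.range (m + 1),
      (if p - 1 ∣ k then (-1 : K) else 0) * (m.choose k : K)) =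
      (if p - 1 ∣ m then (-1 : K) else 0) - 1 := by
    have lhs : (∑ x : Kˣ, ((1 : K) + x) ^ m) = ∑ k ∈ Finset.range (m + 1),
        (if p - 1 ∣ k then (-1 : K) else 0) * (m.choose k : K) := by
      have hbin : ∀ x : Kˣ, ((1 : K) + x) ^ m =
          ∑ k ∈ Finset.range (m + 1), (x : K) ^ k * (m.choose k : K) := by
        intro x
        simpa [add_comm] using add_pow (x : K) (1 : K) m
      rw [Finset.sum_congr rfl fun x _ => hbin x, Finset.sum_comm]
      refine Finset.sum_congr rfl fun k _ => ?_
      rw [← Finset.sum_mul, hunits k]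
    have rhs : (∑ x : Kˣ, ((1 : K) + x) ^ m) =
        (if p - 1 ∣ m then (-1 : K) else 0) - 1 := by
      have h1 : (∑ y : K, ((1 : K) + y) ^ m) = ∑ z : K, z ^ m :=
        Fintype.sum_equiv (Equiv.addLeft (1 : K)) _ _ (fun y => rfl)
      have h2 : (∑ x : Kˣ, ((1 : K) + x) ^ m) =
          (∑ y : K, ((1 : K) + y) ^ m) - ((1 : K) + 0) ^ m := by
        let φ : Kˣ ↪ K := ⟨fun x ↦ x, fun _ _ => Units.ext⟩
        have hmap : univ.map φ = univ \ {0} := by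
          ext x
          simpa only [mem_map, mem_univ, Function.Embedding.coeFn_mk, true_and, mem_sdiff,
            mem_singleton, φ] using (show (∃ a : Kˣ, φ a = x) ↔ ¬x = 0 from isUnit_iff_ne_zero)
        calc (∑ x : Kˣ, ((1 : K) + x) ^ m)
            = ∑ y ∈ univ.map φ, ((1 : K) + y) ^ m := by rw [Finset.sum_map]; rfl
          _ = ∑ y ∈ univ \ {0}, ((1 : K) + y) ^ m := by rw [hmap]
          _ = _ := by
              rw [Finset.sum_sdiff_eq_sub (Finset.singleton_subset_iff.mpr (mem_univ 0)),
                Finset.sum_singleton]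
      rw [h2, h1, hall]; simp
    rw [← lhs, rhs]
  -- rewrite the LHS of key as minus the filtered sum over range (m+1)
  have key2 : (∑ k ∈ (Finset.range (m + 1)).filter (fun k => (p - 1) ∣ k),
      (m.choose k : K)) = 1 + (if p - 1 ∣ m then 1 else 0) := by
    have : (∑ k ∈ Finset.range (m + 1),
        (if p - 1 ∣ k then (-1 : K) else 0) * (m.choose k : K)) =
        -(∑ k ∈ (Finset.range (m + 1)).filter (fun k => (p - 1) ∣ k), (m.choose k : K)) := by
      rw [← Finset.sum_neg_distrib, Finset.sum_filter]
      refine Finset.sum_congr rfl fun k _ => ?_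
      split_ifs <;> ring
    rw [this] at key
    have h := neg_eq_iff_eq_neg.mp key
    rw [h]
    split_ifs <;> ring
  -- split off the k = 0 and k = m terms
  have hsplit : (∑ k ∈ (Finset.range (m + 1)).filter (fun k => (p - 1) ∣ k),
      (m.choose k : K)) =
      (1 : K) + (∑ k ∈ (Finset.Ico 1 m).filter (fun k => (p - 1) ∣ k), (m.choose k : K))
        + (if p - 1 ∣ m then 1 else 0) := by
    rw [Finset.sum_filter, Finset.sum_filter, Finset.sum_range_succ]
    have hr : Finset.range m = insert 0 (Finset.Ico 1 m) := by
      ext k; simp [Finset.mem_Ico]; omega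
    rw [hr, Finset.sum_insert (by simp)]
    by_cases hd : p - 1 ∣ m <;> simp [hd]
  rw [hsplit] at key2
  have hz : (∑ k ∈ (Finset.Ico 1 m).filter (fun k => (p - 1) ∣ k), (m.choose k : K)) = 0 := by
    have := key2
    by_cases hd : p - 1 ∣ m <;> simp [hd] at this <;> linear_combination this
  rw [← Nat.cast_sum] at hz
  exact (ZMod.natCast_eq_zero_iff _ p).mp hz
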